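/- Near-optimality of policies close to an optimal policy (analog of Theorem 3.2 for deterministic transitions): Let S and A be finite types, t : S → A → S a deterministic transition function, T a horizon, and ε ≥ 0. Let π and π̂ be stochastic goal-conditioned policies with (1/2)·Σ_{a∈A} |π(a|s, g) − π̂(a|s, g)| ≤ ε for every state s and goal g, and suppose π̂ is optimal for horizon T: p_{π̂}(T, s, g) ≥ p_{π″}(T, s, g) for every stochastic goal-conditioned policy π″ and every pair (s, g). Then for every stochastic goal-conditioned policy π′ and every pair (s, g), p_{π′}(T, s, g) − p_π(T, s, g) ≤ ε·T. -/

import Mathlib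

/-- `π` is a stochastic goal-conditioned policy: for each state-goal pair `(s, g)`,
`π s g` is a probability mass function on actions. -/
def IsPolicy {S A : Type*} [Fintype A] (π : S → S → A → ℝ) : Prop :=
  (∀ s g a, 0 ≤ π s g a) ∧ ∀ s g, ∑ a, π s g a = 1

/-- The `T`-step reach probability `p_π(T, s, g)` of goal `g` from state `s` under
stochastic goal-conditioned policy `π` and deterministic transition `t`. -/
def reachP {S A : Type*} [Fintype A] [DecidableEq S]
    (t : S → A → S) (π : S → S → A → ℝ) : ℕ → S → S → ℝ
  | 0, s, g => if s = g then 1 else 0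
  | n + 1, s, g => if s = g then 1 else ∑ a, π s g a * reachP t π n (t s a) g

lemma reachP_nonneg {S A : Type*} [Fintype A] [DecidableEq S]
    (t : S → A → S) (π : S → S → A → ℝ) (hπ : IsPolicy π) :
    ∀ n s g, 0 ≤ reachP t π n s g := by
  intro n
  induction n with
  | zero => intro s g; simp only [reachP]; split <;> norm_num
  | succ n ih =>
      intro s g
      simp only [reachP]
      split
      · norm_num
      · exact Finset.sum_nonneg fun a _ => mul_nonneg (hπ.1 s g a) (ih _ g)

lemma reachP_le_one {S A : Type*} [Fintype A] [DecidableEq S]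
    (t : S → A → S) (π : S → S → A → ℝ) (hπ : IsPolicy π) :
    ∀ n s g, reachP t π n s g ≤ 1 := by
  intro n
  induction n with
  | zero => intro s g; simp only [reachP]; split <;> norm_num
  | succ n ih =>
      intro s g
      simp only [reachP]
      split
      · exact le_rfl
      · calc ∑ a, π s g a * reachP t π n (t s a) g
            ≤ ∑ a, π s g a * 1 :=
              Finset.sum_le_sum fun a _ =>
                mul_le_mul_of_nonneg_left (ih _ g) (hπ.1 s g a)
          _ = 1 := by simp [hπ.2 s g]

lemma reachP_diff_le {S A : Type*} [Fintype A] [DecidableEq S]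
    (t : S → A → S) (ε : ℝ) (hε : 0 ≤ ε)
    (π πhat : S → S → A → ℝ) (hπ : IsPolicy π) (hπhat : IsPolicy πhat)
    (htv : ∀ s g : S, (1 / 2 : ℝ) * ∑ a, |π s g a - πhat s g a| ≤ ε) :
    ∀ n s g, reachP t πhat n s g - reachP t π n s g ≤ ε * n := by
  intro n
  induction n with
  | zero => intro s g; simp [reachP]
  | succ n ih =>
      intro s g
      simp only [reachP]
      split
      · have : (0:ℝ) ≤ ε * (n+1) := by positivity
        simp only [if_pos ‹s = g›, sub_self]
        push_cast
        linarith
      · have key : (∑ a, πhat s g a * reachP t πhat n (t s a) g)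
            - ∑ a, π s g a * reachP t π n (t s a) g
            = (∑ a, (πhat s g a - π s g a) * reachP t πhat n (t s a) g)
              + ∑ a, π s g a * (reachP t πhat n (t s a) g - reachP t π n (t s a) g) := by
          rw [← Finset.sum_add_distrib, ← Finset.sum_sub_distrib]
          congr 1; ext a; ring
        rw [key]
        have h1 : (∑ a, (πhat s g a - π s g a) * reachP t πhat n (t s a) g) ≤ ε := by
          have hle : ∀ a ∈ Finset.univ, (πhat s g a - π s g a) * reachP t πhat n (t s a) g
              ≤ max (πhat s g a - π s g a) 0 := by
            intro a _
            rcases le_or_gt 0 (πhat s g a - π s g a) with h | h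
            · calc (πhat s g a - π s g a) * reachP t πhat n (t s a) g
                  ≤ (πhat s g a - π s g a) * 1 :=
                    mul_le_mul_of_nonneg_left (reachP_le_one t πhat hπhat n _ g) h
                _ = πhat s g a - π s g a := mul_one _
                _ ≤ max _ 0 := le_max_left _ _
            · calc (πhat s g a - π s g a) * reachP t πhat n (t s a) g
                  ≤ 0 := mul_nonpos_of_nonpos_of_nonneg h.le
                    (reachP_nonneg t πhat hπhat n _ g)
                _ ≤ max _ 0 := le_max_right _ _
          have hmax : (∑ a, max (πhat s g a - π s g a) 0)
              = (1/2 : ℝ) * ∑ a, |π s g a - πhat s g a| := by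
            have hsum0 : ∑ a, (πhat s g a - π s g a) = 0 := by
              rw [Finset.sum_sub_distrib, hπhat.2 s g, hπ.2 s g]; ring
            have : ∀ a : A, max (πhat s g a - π s g a) 0
                = (1/2 : ℝ) * (|π s g a - πhat s g a| + (πhat s g a - π s g a)) := by
              intro a
              rcases le_or_gt (πhat s g a - π s g a) 0 with h | h
              · rw [max_eq_right h, abs_sub_comm, abs_of_nonpos h]; ring
              · rw [max_eq_left h.le, abs_sub_comm, abs_of_pos h]; ring
            simp only [this]
            rw [← Finset.mul_sum, Finset.sum_add_distrib, hsum0]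
            ring
          calc (∑ a, (πhat s g a - π s g a) * reachP t πhat n (t s a) g)
              ≤ ∑ a, max (πhat s g a - π s g a) 0 := Finset.sum_le_sum hle
            _ = (1/2 : ℝ) * ∑ a, |π s g a - πhat s g a| := hmax
            _ ≤ ε := htv s g
        have h2 : (∑ a, π s g a * (reachP t πhat n (t s a) g - reachP t π n (t s a) g))
            ≤ ε * n := by
          calc (∑ a, π s g a * (reachP t πhat n (t s a) g - reachP t π n (t s a) g))
              ≤ ∑ a, π s g a * (ε * n) :=
                Finset.sum_le_sum fun a _ =>
                  mul_le_mul_of_nonneg_left (ih _ g) (hπ.1 s g a)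
            _ = ε * n := by rw [← Finset.sum_mul, hπ.2 s g, one_mul]
        calc _ ≤ ε + ε * n := add_le_add h1 h2
          _ = ε * (n + 1 : ℕ) := by push_cast; ring

/-- Near-optimality of policies close to an optimal policy: if `π` is within
total-variation distance `ε` of a policy `π̂` that is optimal for horizon `T`, then
for every policy `π'` and every pair `(s, g)`,
`p_{π'}(T, s, g) − p_π(T, s, g) ≤ ε·T`. -/
theorem near_optimality_of_close_policy {S A : Type*} [Fintype S] [Fintype A]
    [DecidableEq S] (t : S → A → S) (T : ℕ) (ε : ℝ) (hε : 0 ≤ ε)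
    (π πhat : S → S → A → ℝ) (hπ : IsPolicy π) (hπhat : IsPolicy πhat)
    (htv : ∀ s g : S, (1 / 2 : ℝ) * ∑ a, |π s g a - πhat s g a| ≤ ε)
    (hopt : ∀ π'' : S → S → A → ℝ, IsPolicy π'' →
      ∀ s g : S, reachP t π'' T s g ≤ reachP t πhat T s g) :
    ∀ π' : S → S → A → ℝ, IsPolicy π' →
      ∀ s g : S, reachP t π' T s g - reachP t π T s g ≤ ε * T := by
  intro π' hπ' s g
  have h1 := hopt π' hπ' s g
  have h2 := reachP_diff_le t ε hε π πhat hπ hπhat htv T s g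
  linarith
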